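/- arXiv:0705.0974 — 5 statements merged into one kernel-verified Lean document; each statement's English description precedes it below -/
import Mathlib

section
/- Let A and B be n×n positive semidefinite Hermitian matrices with det(A) ≥ a ≥ 0 and det(B) ≥ b ≥ 0. Then for every k with 0 ≤ k ≤ n, the mixed determinant D_k(A,B) := (1/\binom{n}{k}) · (coefficient of t^k s^{n-k} in det(tA+sB)) satisfies D_k(A,B) ≥ a^{k/n} · b^{(n-k)/n}. -/
open Matrix Finset Polynomial
open scoped ComplexOrder

lemma lagrange_extract (n k : ℕ) (hk : k ≤ n) :
    ∃ w : ℕ → ℝ, ∀ d : ℕ → ℝ,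
      ∑ j ∈ Finset.range (n+1), w j * ∑ m ∈ Finset.range (n+1), d m * (j:ℝ)^m = d k := by
  classical
  set s := Finset.range (n+1) with hs
  set v : ℕ → ℝ := fun i => (i:ℝ) with hv
  have hvs : Set.InjOn v s := fun x _ y _ h => Nat.cast_injective h
  refine ⟨fun j => (Lagrange.basis s v j).coeff k, fun d => ?_⟩
  set p : Polynomial ℝ := ∑ m ∈ s, Polynomial.C (d m) * Polynomial.X ^ m with hp
  have hdeg : p.degree < (#s : ℕ) := by
    rw [hs, Finset.card_range]
    refine lt_of_le_of_lt (Polynomial.degree_sum_le _ _) ?_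
    rw [Finset.sup_lt_iff (by exact_mod_cast WithBot.bot_lt_coe (n+1))]
    intro m hm
    refine lt_of_le_of_lt (Polynomial.degree_C_mul_X_pow_le _ _) ?_
    exact_mod_cast Finset.mem_range.mp hm
  have heval : ∀ j : ℕ, p.eval (v j) = ∑ m ∈ s, d m * (j:ℝ)^m := by
    intro j
    simp [hp, hv, Polynomial.eval_finset_sum]
  have hcoeff : p.coeff k = d k := by
    rw [hp, Polynomial.finset_sum_coeff]
    rw [Finset.sum_eq_single k]
    · simp
    · intro m _ hmk
      simp [Polynomial.coeff_C_mul, Polynomial.coeff_X_pow, (Ne.symm hmk)]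
    · intro hks
      exact absurd (Finset.mem_range.mpr (Nat.lt_succ_of_le hk)) hks
  have hinterp := Lagrange.eq_interpolate hvs hdeg
  calc ∑ j ∈ s, (Lagrange.basis s v j).coeff k * (∑ m ∈ s, d m * (j:ℝ)^m)
      = ∑ j ∈ s, (Polynomial.C (p.eval (v j)) * Lagrange.basis s v j).coeff k := by
        refine Finset.sum_congr rfl fun j _ => ?_
        rw [heval j, Polynomial.coeff_C_mul, mul_comm]
    _ = (Lagrange.interpolate s v fun i => p.eval (v i)).coeff k := by
        rw [Lagrange.interpolate_apply, Polynomial.finset_sum_coeff]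
    _ = p.coeff k := by rw [← hinterp]
    _ = d k := hcoeff

lemma det_smul_add_smul_one {n : ℕ} {M : Matrix (Fin n) (Fin n) ℂ} (hM : M.IsHermitian)
    (t s : ℝ) :
    ((t:ℂ) • M + (s:ℂ) • 1).det = ((∏ i, (t * hM.eigenvalues i + s) : ℝ) : ℂ) := by
  set U : Matrix (Fin n) (Fin n) ℂ := (hM.eigenvectorUnitary : Matrix (Fin n) (Fin n) ℂ) with hU
  have hUU : U * star U = 1 := Matrix.mem_unitaryGroup_iff.mp hM.eigenvectorUnitary.2
  have hdiag : (t:ℂ) • (Matrix.diagonal (RCLike.ofReal ∘ hM.eigenvalues)) + (s:ℂ) • 1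
      = Matrix.diagonal (fun i => ((t * hM.eigenvalues i + s : ℝ) : ℂ)) := by
    ext i j
    by_cases h : i = j
    · subst h; simp [Matrix.diagonal_apply_eq, Matrix.one_apply_eq]
    · simp [Matrix.diagonal_apply_ne _ h, Matrix.one_apply_ne h]
  have key : (t:ℂ) • M + (s:ℂ) • 1
      = U * (Matrix.diagonal (fun i => ((t * hM.eigenvalues i + s : ℝ) : ℂ))) * star U := by
    rw [← hdiag, Matrix.mul_add, Matrix.add_mul]
    congr 1
    · conv_lhs => rw [hM.spectral_theorem]
      rw [Unitary.conjStarAlgAut_apply, Matrix.mul_smul, Matrix.smul_mul]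
    · rw [Matrix.mul_smul, Matrix.smul_mul, mul_one, hUU]
  have hUU2 : star U * U = 1 := Matrix.mem_unitaryGroup_iff'.mp hM.eigenvectorUnitary.2
  rw [key, Matrix.det_mul, Matrix.det_mul, mul_comm, ← mul_assoc, ← Matrix.det_mul, hUU2,
    Matrix.det_one, one_mul, Matrix.det_diagonal]
  push_cast
  rfl

lemma card_filter_mem_powersetCard {n k : ℕ} (hk1 : 1 ≤ k) (i : Fin n) :
    (((Finset.univ : Finset (Fin n)).powersetCard k).filter (fun S => i ∈ S)).card
      = (n-1).choose (k-1) := by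
  classical
  have : (((Finset.univ : Finset (Fin n)).powersetCard k).filter (fun S => i ∈ S)).card
      = (Finset.powersetCard (k-1) (Finset.univ.erase i)).card := by
    refine Finset.card_bij' (fun S _ => S.erase i) (fun T _ => insert i T) ?_ ?_ ?_ ?_
    · intro S hS
      rw [Finset.mem_filter, Finset.mem_powersetCard] at hS
      obtain ⟨⟨_, hcard⟩, hiS⟩ := hS
      rw [Finset.mem_powersetCard]
      constructor
      · intro j hj
        rw [Finset.mem_erase] at hj ⊢
        exact ⟨hj.1, Finset.mem_univ j⟩
      · rw [Finset.card_erase_of_mem hiS, hcard]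
    · intro T hT
      rw [Finset.mem_powersetCard] at hT
      obtain ⟨hsub, hcard⟩ := hT
      have hiT : i ∉ T := fun h => (Finset.mem_erase.mp (hsub h)).1 rfl
      rw [Finset.mem_filter, Finset.mem_powersetCard]
      refine ⟨⟨fun j _ => Finset.mem_univ j, ?_⟩, Finset.mem_insert_self i T⟩
      rw [Finset.card_insert_of_notMem hiT, hcard]
      omega
    · intro S hS
      rw [Finset.mem_filter] at hS
      exact Finset.insert_erase hS.2
    · intro T hT
      rw [Finset.mem_powersetCard] at hT
      have hiT : i ∉ T := fun h => (Finset.mem_erase.mp (hT.1 h)).1 rfl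
      exact Finset.erase_insert hiT
  rw [this, Finset.card_powersetCard, Finset.card_erase_of_mem (Finset.mem_univ i),
    Finset.card_univ, Fintype.card_fin]

lemma amgm_esymm {n k : ℕ} (hn : 0 < n) (hk : k ≤ n) (μ : Fin n → ℝ) (hμ : ∀ i, 0 ≤ μ i) :
    (n.choose k : ℝ) * (∏ i, μ i) ^ ((k:ℝ)/n)
      ≤ ∑ S ∈ Finset.powersetCard k Finset.univ, ∏ i ∈ S, μ i := by
  classical
  rcases Nat.eq_zero_or_pos k with rfl | hk1
  · simp [Real.rpow_zero]
  set P := Finset.powersetCard k (Finset.univ : Finset (Fin n)) with hP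
  have hcard : #P = n.choose k := by
    rw [hP, Finset.card_powersetCard, Finset.card_univ, Fintype.card_fin]
  have hN : 0 < (n.choose k : ℝ) := by exact_mod_cast Nat.choose_pos hk
  have hz : ∀ S ∈ P, (0:ℝ) ≤ ∏ i ∈ S, μ i := fun S _ => Finset.prod_nonneg fun i _ => hμ i
  have hw1 : ∑ _S ∈ P, (n.choose k : ℝ)⁻¹ = 1 := by
    rw [Finset.sum_const, hcard, nsmul_eq_mul, mul_inv_cancel₀ hN.ne']
  have hgm := Real.geom_mean_le_arith_mean_weighted P (fun _ => (n.choose k : ℝ)⁻¹)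
    (fun S => ∏ i ∈ S, μ i) (fun _ _ => by positivity) hw1 hz
  have hPP : ∏ S ∈ P, ∏ i ∈ S, μ i = (∏ i, μ i) ^ ((n-1).choose (k-1)) := by
    calc ∏ S ∈ P, ∏ i ∈ S, μ i
        = ∏ S ∈ P, ∏ i, (if i ∈ S then μ i else 1) := by
          refine Finset.prod_congr rfl fun S hS => ?_
          rw [Finset.prod_ite_mem, Finset.univ_inter]
      _ = ∏ i, ∏ S ∈ P, (if i ∈ S then μ i else 1) := Finset.prod_comm
      _ = ∏ i, (μ i) ^ (#(P.filter (fun S => i ∈ S))) := by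
          refine Finset.prod_congr rfl fun i _ => ?_
          rw [← Finset.prod_filter, Finset.prod_const]
      _ = ∏ i, (μ i) ^ ((n-1).choose (k-1)) := by
          refine Finset.prod_congr rfl fun i _ => ?_
          rw [card_filter_mem_powersetCard hk1]
      _ = (∏ i, μ i) ^ ((n-1).choose (k-1)) := by rw [Finset.prod_pow]
  have hprodnn : (0:ℝ) ≤ ∏ i, μ i := Finset.prod_nonneg fun i _ => hμ i
  have hL : ∏ S ∈ P, (∏ i ∈ S, μ i) ^ ((n.choose k:ℝ)⁻¹) = (∏ i, μ i) ^ ((k:ℝ)/n) := by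
    rw [Real.finset_prod_rpow P _ hz _, hPP, ← Real.rpow_natCast (∏ i, μ i) ((n-1).choose (k-1)),
      ← Real.rpow_mul hprodnn]
    congr 1
    have hid : n * ((n-1).choose (k-1)) = n.choose k * k := by
      have h := Nat.add_one_mul_choose_eq (n-1) (k-1)
      have h1 : n - 1 + 1 = n := Nat.succ_pred_eq_of_pos hn
      have h2 : k - 1 + 1 = k := Nat.succ_pred_eq_of_pos hk1
      rwa [h1, h2] at h
    have hn' : (n:ℝ) ≠ 0 := by exact_mod_cast hn.ne'
    have hidR : (n:ℝ) * ((n-1).choose (k-1) : ℝ) = (n.choose k : ℝ) * k := by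
      exact_mod_cast congrArg (fun x : ℕ => (x:ℝ)) hid
    field_simp
    linarith
  rw [hL] at hgm
  calc (n.choose k : ℝ) * (∏ i, μ i) ^ ((k:ℝ)/n)
      ≤ (n.choose k : ℝ) * ∑ S ∈ P, (n.choose k : ℝ)⁻¹ * ∏ i ∈ S, μ i := by
        exact mul_le_mul_of_nonneg_left hgm hN.le
    _ = ∑ S ∈ P, ∏ i ∈ S, μ i := by
        rw [← Finset.mul_sum, ← mul_assoc, mul_inv_cancel₀ hN.ne', one_mul]

lemma prod_affine_expand {n : ℕ} (μ : Fin n → ℝ) (t : ℝ) :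
    ∏ i, (t * μ i + 1) = ∑ m ∈ Finset.range (n+1),
      (∑ S ∈ Finset.powersetCard m Finset.univ, ∏ i ∈ S, μ i) * t^m := by
  classical
  rw [Finset.prod_add]
  have h1 : ∀ T : Finset (Fin n), (∏ i ∈ T, t * μ i) * (∏ _i ∈ Finset.univ \ T, (1:ℝ))
      = (∏ i ∈ T, μ i) * t ^ #T := by
    intro T
    rw [Finset.prod_const_one, mul_one, Finset.prod_mul_distrib, Finset.prod_const, mul_comm]
  simp_rw [h1]
  have h2 := Finset.powerset_card_disjiUnion (Finset.univ : Finset (Fin n))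
  rw [Finset.sum_powerset]
  rw [Finset.card_univ, Fintype.card_fin]
  refine Finset.sum_congr rfl fun m _ => ?_
  rw [Finset.sum_mul]
  refine Finset.sum_congr rfl fun T hT => ?_
  rw [(Finset.mem_powersetCard.mp hT).2]

lemma herm_det_ofReal {n : ℕ} {M : Matrix (Fin n) (Fin n) ℂ} (hM : M.IsHermitian) :
    M.det = ((∏ i, hM.eigenvalues i : ℝ) : ℂ) := by
  rw [hM.det_eq_prod_eigenvalues]
  push_cast
  rfl

open scoped MatrixOrder in
lemma core' {n : ℕ} (hn : 0 < n) {k : ℕ} (hk : k ≤ n)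
    (A B : Matrix (Fin n) (Fin n) ℂ) (hA : A.PosSemidef) (hB : B.PosDef)
    (w : ℕ → ℝ)
    (hw : ∀ d : ℕ → ℝ,
      ∑ j ∈ Finset.range (n+1), w j * ∑ m ∈ Finset.range (n+1), d m * (j:ℝ)^m = d k) :
    (n.choose k : ℝ) * A.det.re ^ ((k:ℝ)/n) * B.det.re ^ (((n-k : ℕ):ℝ)/n)
      ≤ ∑ j ∈ Finset.range (n+1), w j * ((((j:ℕ):ℝ):ℂ) • A + B).det.re := by
  classical
  set S := CFC.sqrt B with hSdef
  have hS : S.PosSemidef := (CFC.sqrt_nonneg B).posSemidef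
  have hSS : S * S = B := CFC.sqrt_mul_sqrt_self B hB.posSemidef.nonneg
  have hdetSS : S.det * S.det = B.det := by rw [← Matrix.det_mul, hSS]
  have hBdet0 : B.det ≠ 0 := hB.det_pos.ne'
  have hSdet0 : S.det ≠ 0 := by
    intro h; apply hBdet0; rw [← hdetSS, h, mul_zero]
  have hinv1 : S⁻¹ * S = 1 := Matrix.nonsing_inv_mul S (Ne.isUnit hSdet0)
  have hinv2 : S * S⁻¹ = 1 := Matrix.mul_nonsing_inv S (Ne.isUnit hSdet0)
  set M := S⁻¹ * A * S⁻¹ with hMdef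
  have hSinvH : (S⁻¹).IsHermitian := hS.isHermitian.inv
  have hM : M.PosSemidef := by
    have := hA.mul_mul_conjTranspose_same S⁻¹
    rwa [hSinvH.eq] at this
  set μ := hM.isHermitian.eigenvalues with hμdef
  have hμ0 : ∀ i, 0 ≤ μ i := hM.eigenvalues_nonneg
  have hSMS : S * M * S = A := by
    rw [hMdef, ← Matrix.mul_assoc, ← Matrix.mul_assoc, hinv2, Matrix.one_mul,
      Matrix.mul_assoc, hinv1, Matrix.mul_one]
  set β := B.det.re with hβdef
  have hBre : B.det = (β : ℂ) := by
    rw [hβdef, herm_det_ofReal hB.isHermitian, Complex.ofReal_re]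
  have hβpos : 0 < β := by
    rw [← Complex.zero_lt_real, ← hBre]; exact hB.det_pos
  set P := ∏ i, μ i with hPdef
  have hP0 : 0 ≤ P := Finset.prod_nonneg fun i _ => hμ0 i
  have hMre : M.det = (P : ℂ) := herm_det_ofReal hM.isHermitian
  have hAre : A.det = ((P * β : ℝ) : ℂ) := by
    rw [← hSMS, Matrix.det_mul, Matrix.det_mul, mul_comm, ← mul_assoc, hdetSS, hBre, hMre]
    push_cast; ring
  have hαre : A.det.re = P * β := by rw [hAre, Complex.ofReal_re]
  set α := A.det.re with hαdef
  have hα0 : 0 ≤ α := by rw [hαre]; positivity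
  -- evaluation identity
  have key : ∀ t : ℝ, ((t:ℂ) • A + B).det = ((β * ∏ i, (t * μ i + 1) : ℝ) : ℂ) := by
    intro t
    have hmat : (t:ℂ) • A + B = S * ((t:ℂ) • M + 1) * S := by
      rw [Matrix.mul_add, Matrix.add_mul, Matrix.mul_smul, Matrix.smul_mul, hSMS,
        Matrix.mul_one, hSS]
    have hdm : ((t:ℂ) • M + 1).det = ((∏ i, (t * μ i + 1) : ℝ) : ℂ) := by
      have := det_smul_add_smul_one hM.isHermitian t 1
      simpa using this
    rw [hmat, Matrix.det_mul, Matrix.det_mul, mul_comm, ← mul_assoc, hdetSS, hBre, hdm]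
    push_cast; ring
  set e : ℕ → ℝ := fun m => ∑ T ∈ Finset.powersetCard m Finset.univ, ∏ i ∈ T, μ i with hedef
  set d : ℕ → ℝ := fun m => β * e m with hddef
  have hsum : ∑ j ∈ Finset.range (n+1), w j * ((((j:ℕ):ℝ):ℂ) • A + B).det.re = d k := by
    rw [← hw d]
    refine Finset.sum_congr rfl fun j _ => ?_
    congr 1
    rw [key (j:ℝ), Complex.ofReal_re, prod_affine_expand, Finset.mul_sum]
    refine Finset.sum_congr rfl fun m _ => ?_
    rw [hddef]; ring
  rw [hsum, hddef]
  have hamgm := amgm_esymm hn hk μ hμ0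
  have hstep : β * ((n.choose k : ℝ) * P ^ ((k:ℝ)/n)) ≤ β * e k :=
    mul_le_mul_of_nonneg_left hamgm hβpos.le
  refine le_trans (le_of_eq ?_) hstep
  -- (choose) * α^{k/n} * β^{(n-k)/n} = β * (choose * P^{k/n})
  have hPab : P = α / β := by rw [hαre]; field_simp
  have hcast : (((n-k : ℕ):ℝ)) = (n : ℝ) - k := by
    exact Nat.cast_sub hk
  have hnR : (0:ℝ) < n := by exact_mod_cast hn
  have hexp : (((n-k : ℕ):ℝ))/n = 1 - (k:ℝ)/n := by
    rw [hcast]; field_simp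
  rw [hPab, Real.div_rpow hα0 hβpos.le, hexp, Real.rpow_sub hβpos, Real.rpow_one]
  field_simp

/-- Mixed determinant inequality: if `A`, `B` are `n × n` positive semidefinite Hermitian
matrices with `det A ≥ a ≥ 0`, `det B ≥ b ≥ 0`, and `c k` denotes the coefficient of
`t^k s^(n-k)` in `det (t A + s B)`, then the mixed determinant
`D_k(A,B) = c k / (n choose k)` satisfies `D_k(A,B) ≥ a^(k/n) b^((n-k)/n)`. -/
theorem stmt0 (n : ℕ) (hn : 0 < n) (A B : Matrix (Fin n) (Fin n) ℂ)
    (hA : A.PosSemidef) (hB : B.PosSemidef) (a b : ℝ) (ha : 0 ≤ a) (hb : 0 ≤ b)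
    (hdetA : a ≤ A.det.re) (hdetB : b ≤ B.det.re)
    (c : ℕ → ℝ)
    (hc : ∀ t s : ℝ, ((t : ℂ) • A + (s : ℂ) • B).det
      = ∑ m ∈ Finset.range (n + 1), (c m : ℂ) * (t : ℂ) ^ m * (s : ℂ) ^ (n - m))
    (k : ℕ) (hk : k ≤ n) :
    a ^ ((k : ℝ) / n) * b ^ (((n - k : ℕ) : ℝ) / n) ≤ (1 / (n.choose k : ℝ)) * c k := by
  classical
  obtain ⟨w, hw⟩ := lagrange_extract n k hk
  set G : ℝ → ℝ := fun ε => ∑ j ∈ Finset.range (n+1),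
    w j * ((((j:ℕ):ℝ):ℂ) • (A + (ε:ℂ) • 1) + (B + (ε:ℂ) • 1)).det.re with hG
  have hGcont : Continuous G := by
    refine continuous_finset_sum _ fun j _ => ?_
    refine Continuous.mul continuous_const ?_
    refine Complex.continuous_re.comp ?_
    refine Continuous.matrix_det ?_
    have h1 : Continuous fun ε : ℝ => (ε:ℂ) • (1 : Matrix (Fin n) (Fin n) ℂ) :=
      Complex.continuous_ofReal.smul continuous_const
    exact ((continuous_const.add h1).const_smul ((((j:ℕ):ℝ):ℂ))).add (continuous_const.add h1)
  have hG0 : G 0 = c k := by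
    rw [hG]
    simp only
    have h0 : ∀ j : ℕ, ((((j:ℕ):ℝ):ℂ) • (A + ((0:ℝ):ℂ) • 1) + (B + ((0:ℝ):ℂ) • 1)).det.re
        = ∑ m ∈ Finset.range (n+1), c m * ((j:ℕ):ℝ)^m := by
      intro j
      have hc1 := hc ((j:ℕ):ℝ) 1
      simp only [Complex.ofReal_zero, zero_smul, add_zero, Complex.ofReal_one, one_smul] at hc1 ⊢
      rw [hc1]
      have : (∑ m ∈ Finset.range (n+1), (c m:ℂ) * (((j:ℕ):ℝ):ℂ)^m * (1:ℂ)^(n-m))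
          = ((∑ m ∈ Finset.range (n+1), c m * ((j:ℕ):ℝ)^m : ℝ) : ℂ) := by
        push_cast
        simp
      rw [this, Complex.ofReal_re]
    simp only [h0]
    exact hw c
  set R : ℝ := (n.choose k:ℝ) * a ^ ((k:ℝ)/n) * b ^ (((n-k:ℕ):ℝ)/n) with hR
  have hlow : ∀ ε ∈ Set.Ioi (0:ℝ), R ≤ G ε := by
    intro ε hε
    have hε0 : (0:ℝ) < ε := hε
    have hone : ((ε:ℂ) • (1:Matrix (Fin n) (Fin n) ℂ)).PosDef := by
      have hd : ((ε:ℂ) • (1:Matrix (Fin n) (Fin n) ℂ))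
          = Matrix.diagonal (fun _ : Fin n => (ε:ℂ)) := by
        ext i j
        by_cases h : i = j
        · subst h; simp
        · simp [Matrix.one_apply_ne h, Matrix.diagonal_apply_ne _ h]
      rw [hd]
      exact Matrix.PosDef.diagonal fun i => Complex.zero_lt_real.mpr hε0
    have hAε : (A + (ε:ℂ)•1).PosDef := Matrix.PosDef.posSemidef_add hA hone
    have hBε : (B + (ε:ℂ)•1).PosDef := Matrix.PosDef.posSemidef_add hB hone
    have hcore := core' hn hk (A + (ε:ℂ)•1) (B + (ε:ℂ)•1) hAε.posSemidef hBε w hw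
    refine le_trans ?_ hcore
    have hdet' : ∀ (M : Matrix (Fin n) (Fin n) ℂ) (hM : M.PosSemidef) (x : ℝ),
        x ≤ M.det.re → x ≤ (M + (ε:ℂ)•1).det.re := by
      intro M hM x hx
      have hkey := det_smul_add_smul_one hM.isHermitian 1 ε
      have h1 : ((1:ℝ):ℂ) • M + (ε:ℂ)•1 = M + (ε:ℂ)•1 := by
        norm_num
      rw [h1] at hkey
      rw [hkey, Complex.ofReal_re]
      calc x ≤ M.det.re := hx
        _ = ∏ i, hM.isHermitian.eigenvalues i := by
            rw [herm_det_ofReal hM.isHermitian, Complex.ofReal_re]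
        _ ≤ ∏ i, (1 * hM.isHermitian.eigenvalues i + ε) := by
            refine Finset.prod_le_prod (fun i _ => hM.eigenvalues_nonneg i)
              (fun i _ => by nlinarith [hM.eigenvalues_nonneg i])
    have hdA := hdet' A hA a hdetA
    have hdB := hdet' B hB b hdetB
    have hAd0 : (0:ℝ) ≤ (A + (ε:ℂ)•1).det.re := le_trans ha hdA
    have e1 : a ^ ((k:ℝ)/n) ≤ (A + (ε:ℂ)•1).det.re ^ ((k:ℝ)/n) :=
      Real.rpow_le_rpow ha hdA (by positivity)
    have e2 : b ^ (((n-k:ℕ):ℝ)/n) ≤ (B + (ε:ℂ)•1).det.re ^ (((n-k:ℕ):ℝ)/n) :=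
      Real.rpow_le_rpow hb hdB (by positivity)
    rw [hR]
    have hch : (0:ℝ) ≤ (n.choose k:ℝ) := by positivity
    refine mul_le_mul (mul_le_mul le_rfl e1 (by positivity) hch) e2 (by positivity) ?_
    positivity
  have htend : Filter.Tendsto G (nhdsWithin 0 (Set.Ioi 0)) (nhds (G 0)) :=
    (hGcont.tendsto 0).mono_left nhdsWithin_le_nhds
  have hfin : R ≤ G 0 :=
    ge_of_tendsto htend (eventually_nhdsWithin_of_forall hlow)
  rw [hG0] at hfin
  have hch : (0:ℝ) < (n.choose k:ℝ) := by exact_mod_cast Nat.choose_pos hk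
  rw [one_div, ← div_eq_inv_mul, le_div_iff₀ hch]
  calc a ^ ((k:ℝ)/n) * b ^ (((n-k:ℕ):ℝ)/n) * (n.choose k:ℝ) = R := by rw [hR]; ring
    _ ≤ c k := hfin
end

section
/- The function A ↦ det(A)^{1/n} is concave on the cone of n×n positive semidefinite Hermitian matrices: for A, B positive semidefinite and t ∈ [0,1], det(tA + (1-t)B)^{1/n} ≥ t·det(A)^{1/n} + (1-t)·det(B)^{1/n}. -/
open Matrix
open scoped ComplexOrder

/-- Superadditivity of the geometric mean. -/
lemma geom_superadd {n : ℕ} (hn : 0 < n) (lam : Fin n → ℝ) (hlam : ∀ i, 0 ≤ lam i) :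
    1 + (∏ i, lam i) ^ ((1 : ℝ) / n) ≤ (∏ i, (1 + lam i)) ^ ((1 : ℝ) / n) := by
  have hpos : ∀ i, (0:ℝ) < 1 + lam i := fun i => by linarith [hlam i]
  set P : ℝ := ∏ i, (1 + lam i) with hP
  have hPpos : 0 < P := Finset.prod_pos fun i _ => hpos i
  have hwsum : ∑ _i : Fin n, (1 : ℝ) / n = 1 := by
    have : (n:ℝ) ≠ 0 := Nat.cast_ne_zero.mpr hn.ne'
    simp only [Finset.sum_const, Finset.card_univ, Fintype.card_fin, nsmul_eq_mul]
    field_simp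
  have h1 := Real.geom_mean_le_arith_mean_weighted Finset.univ (fun _ => (1:ℝ)/n)
    (fun i => (1 + lam i)⁻¹) (fun i _ => by positivity) hwsum
    (fun i _ => (inv_nonneg.mpr (hpos i).le))
  have h2 := Real.geom_mean_le_arith_mean_weighted Finset.univ (fun _ => (1:ℝ)/n)
    (fun i => lam i * (1 + lam i)⁻¹) (fun i _ => by positivity) hwsum
    (fun i _ => mul_nonneg (hlam i) (inv_nonneg.mpr (hpos i).le))
  have hsum : (∑ i : Fin n, (1:ℝ)/n * (1 + lam i)⁻¹)
      + ∑ i : Fin n, (1:ℝ)/n * (lam i * (1 + lam i)⁻¹) = 1 := by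
    rw [← Finset.sum_add_distrib]
    conv_rhs => rw [← hwsum]
    refine Finset.sum_congr rfl fun i _ => ?_
    have h := (hpos i).ne'
    field_simp
  have e1 : (∏ i : Fin n, ((1 + lam i)⁻¹) ^ ((1:ℝ)/n)) = (P ^ ((1:ℝ)/n))⁻¹ := by
    rw [Real.finset_prod_rpow _ _ (fun i _ => (inv_nonneg.mpr (hpos i).le)),
      Finset.prod_inv_distrib, ← hP, Real.inv_rpow hPpos.le]
  have e2 : (∏ i : Fin n, (lam i * (1 + lam i)⁻¹) ^ ((1:ℝ)/n))
      = (∏ i, lam i) ^ ((1:ℝ)/n) * (P ^ ((1:ℝ)/n))⁻¹ := by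
    rw [Real.finset_prod_rpow _ _
        (fun i _ => mul_nonneg (hlam i) (inv_nonneg.mpr (hpos i).le)),
      Finset.prod_mul_distrib,
      Real.mul_rpow (Finset.prod_nonneg fun i _ => hlam i)
        (Finset.prod_nonneg fun i _ => (inv_nonneg.mpr (hpos i).le)),
      Finset.prod_inv_distrib, ← hP, Real.inv_rpow hPpos.le]
  rw [e1] at h1
  rw [e2] at h2
  have hPr : 0 < P ^ ((1:ℝ)/n) := Real.rpow_pos_of_pos hPpos _
  have := add_le_add h1 h2
  rw [hsum] at this
  calc 1 + (∏ i, lam i) ^ ((1:ℝ)/n)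
      = ((P ^ ((1:ℝ)/n))⁻¹ + (∏ i, lam i) ^ ((1:ℝ)/n) * (P ^ ((1:ℝ)/n))⁻¹) * P ^ ((1:ℝ)/n) := by
        field_simp
    _ ≤ 1 * P ^ ((1:ℝ)/n) := by
        exact mul_le_mul_of_nonneg_right this hPr.le
    _ = P ^ ((1:ℝ)/n) := one_mul _

variable {n : ℕ}

/-- The determinant of a PSD matrix is a nonnegative real. -/
lemma psd_det_coe {A : Matrix (Fin n) (Fin n) ℂ} (hA : A.PosSemidef) :
    A.det = (A.det.re : ℂ) := by
  have h : A.det = ((∏ i, hA.1.eigenvalues i : ℝ) : ℂ) := by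
    rw [hA.1.det_eq_prod_eigenvalues]; push_cast; rfl
  rw [h, Complex.ofReal_re]

lemma psd_det_re_nonneg {A : Matrix (Fin n) (Fin n) ℂ} (hA : A.PosSemidef) :
    0 ≤ A.det.re := by
  have := hA.1.det_eq_prod_eigenvalues
  have h : A.det = ((∏ i, hA.1.eigenvalues i : ℝ) : ℂ) := by rw [this]; push_cast; rfl
  rw [h, Complex.ofReal_re]
  exact Finset.prod_nonneg fun i _ => hA.eigenvalues_nonneg i

open scoped MatrixOrder in
/-- Key factorization: if `N` is PSD with nonzero determinant, then the eigenvalues of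
`S⁻¹ M S⁻¹` (S = sqrt N) witness `det (M+N) = det N * ∏ (1+λ)` and `det M = det N * ∏ λ`. -/
lemma key_fact {M N : Matrix (Fin n) (Fin n) ℂ} (hM : M.PosSemidef) (hN : N.PosSemidef)
    (hdN : N.det ≠ 0) :
    ∃ lam : Fin n → ℝ, (∀ i, 0 ≤ lam i) ∧
      (M + N).det.re = N.det.re * ∏ i, (1 + lam i) ∧
      M.det.re = N.det.re * ∏ i, lam i := by
  classical
  set S := CFC.sqrt N with hSdef
  have hS : S.PosSemidef := (CFC.sqrt_nonneg N).posSemidef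
  have hSS : S * S = N := CFC.sqrt_mul_sqrt_self N hN.nonneg
  have hdS : S.det * S.det = N.det := by rw [← det_mul, hSS]
  have hSdet : S.det ≠ 0 := by
    intro h; apply hdN; rw [← hdS, h, mul_zero]
  have hSunit : IsUnit S.det := isUnit_iff_ne_zero.mpr hSdet
  have hSinv : S * S⁻¹ = 1 := mul_nonsing_inv S hSunit
  have hSinv' : S⁻¹ * S = 1 := nonsing_inv_mul S hSunit
  have hSiH : (S⁻¹)ᴴ = S⁻¹ := hS.1.inv
  set C := S⁻¹ * M * S⁻¹ with hCdef
  have hC : C.PosSemidef := by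
    have := hM.mul_mul_conjTranspose_same S⁻¹
    rwa [hSiH] at this
  set lam := hC.1.eigenvalues with hlamdef
  have hSCS : S * C * S = M := by
    calc S * C * S = (S * S⁻¹) * M * (S⁻¹ * S) := by
          rw [hCdef]; simp only [mul_assoc]
      _ = M := by rw [hSinv, hSinv', one_mul, mul_one]
  refine ⟨lam, fun i => hC.eigenvalues_nonneg i, ?_, ?_⟩
  · -- det (M + N) = det N * det (1 + C), and det (1 + C) = ∏ (1 + λ)
    have hfact : M + N = S * (1 + C) * S := by
      rw [mul_add, mul_one, add_mul, hSS, hSCS, add_comm]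
    -- det (1 + C) via spectral theorem
    set U : Matrix (Fin n) (Fin n) ℂ := (hC.1.eigenvectorUnitary : Matrix (Fin n) (Fin n) ℂ) with hUdef
    have hUmem : U ∈ Matrix.unitaryGroup (Fin n) ℂ := hC.1.eigenvectorUnitary.2
    have hUU : U * star U = 1 := (Matrix.mem_unitaryGroup_iff).mp hUmem
    have hspec : C = U * diagonal (RCLike.ofReal ∘ lam) * star U := hC.1.spectral_theorem
    have honeC : (1 : Matrix (Fin n) (Fin n) ℂ) + C
        = U * diagonal (fun i => 1 + (lam i : ℂ)) * star U := by
      have hone : (1 : Matrix (Fin n) (Fin n) ℂ) = U * 1 * star U := by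
        rw [mul_one, hUU]
      calc (1 : Matrix (Fin n) (Fin n) ℂ) + C
          = U * 1 * star U + U * diagonal (RCLike.ofReal ∘ lam) * star U := by
            rw [← hone, ← hspec]
        _ = U * (1 + diagonal (RCLike.ofReal ∘ lam)) * star U := by
            rw [mul_add, add_mul]
        _ = U * diagonal (fun i => 1 + (lam i : ℂ)) * star U := by
            congr 1
            congr 1
            rw [← diagonal_one, diagonal_add]
            rfl
    have hdetU : U.det * (star U).det = 1 := by rw [← det_mul, hUU, det_one]
    have hdet1C : (1 + C).det = ((∏ i, (1 + lam i) : ℝ) : ℂ) := by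
      rw [honeC, det_mul, det_mul, mul_comm U.det _, mul_assoc, hdetU, mul_one,
        det_diagonal]
      push_cast
      rfl
    have hthis : (M + N).det = N.det * ((∏ i, (1 + lam i) : ℝ) : ℂ) := by
      rw [hfact, det_mul, det_mul, mul_comm S.det _, mul_assoc, hdS, mul_comm, hdet1C]
    rw [psd_det_coe hN] at hthis
    rw [hthis, ← Complex.ofReal_mul, Complex.ofReal_re]
  · -- det M = det N * det C = det N * ∏ λ
    have hdetC : C.det = ((∏ i, lam i : ℝ) : ℂ) := by
      rw [hC.1.det_eq_prod_eigenvalues]; push_cast; rfl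
    have hMC : M.det = N.det * C.det := by
      rw [← hSCS, det_mul, det_mul, mul_comm S.det _, mul_assoc, hdS, mul_comm]
    rw [hdetC, psd_det_coe hN] at hMC
    rw [hMC, ← Complex.ofReal_mul, Complex.ofReal_re]

lemma psd_det_re_pos {A : Matrix (Fin n) (Fin n) ℂ} (hA : A.PosSemidef)
    (h : A.det ≠ 0) : 0 < A.det.re :=
  lt_of_le_of_ne (psd_det_re_nonneg hA) fun h0 => h (by rw [psd_det_coe hA, ← h0]; simp)

/-- Minkowski's determinant inequality. -/
lemma minkowski (hn : 0 < n) {M N : Matrix (Fin n) (Fin n) ℂ}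
    (hM : M.PosSemidef) (hN : N.PosSemidef) :
    M.det.re ^ ((1 : ℝ) / n) + N.det.re ^ ((1 : ℝ) / n) ≤ (M + N).det.re ^ ((1 : ℝ) / n) := by
  have h1n : (0:ℝ) < 1 / n := by positivity
  by_cases hN0 : N.det = 0
  · have hNre : N.det.re = 0 := by rw [hN0]; simp
    rw [hNre, Real.zero_rpow h1n.ne', add_zero]
    by_cases hM0 : M.det = 0
    · have : M.det.re = 0 := by rw [hM0]; simp
      rw [this, Real.zero_rpow h1n.ne']
      exact Real.rpow_nonneg (psd_det_re_nonneg (hM.add hN)) _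
    · obtain ⟨lam, hlam, hadd, -⟩ := key_fact hN hM hM0
      rw [add_comm] at hadd
      have hMpos := psd_det_re_pos hM hM0
      have h1 : (1:ℝ) ≤ ∏ i, (1 + lam i) := by
        calc (1:ℝ) = ∏ _i : Fin n, (1:ℝ) := by simp
          _ ≤ ∏ i, (1 + lam i) := Finset.prod_le_prod (fun i _ => zero_le_one)
              (fun i _ => by linarith [hlam i])
      have : M.det.re ≤ (M + N).det.re := by
        rw [hadd]
        nlinarith
      exact Real.rpow_le_rpow hMpos.le this h1n.le
  · obtain ⟨lam, hlam, hadd, hMdet⟩ := key_fact hM hN hN0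
    have hNpos := psd_det_re_pos hN hN0
    have hProd : (0:ℝ) ≤ ∏ i, lam i := Finset.prod_nonneg fun i _ => hlam i
    calc M.det.re ^ ((1:ℝ)/n) + N.det.re ^ ((1:ℝ)/n)
        = N.det.re ^ ((1:ℝ)/n) * (1 + (∏ i, lam i) ^ ((1:ℝ)/n)) := by
          rw [hMdet, Real.mul_rpow hNpos.le hProd]; ring
      _ ≤ N.det.re ^ ((1:ℝ)/n) * (∏ i, (1 + lam i)) ^ ((1:ℝ)/n) := by
          exact mul_le_mul_of_nonneg_left (geom_superadd hn lam hlam)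
            (Real.rpow_nonneg hNpos.le _)
      _ = (M + N).det.re ^ ((1:ℝ)/n) := by
          rw [hadd, Real.mul_rpow hNpos.le (Finset.prod_nonneg fun i _ => by
            linarith [hlam i])]

lemma smul_posSemidef {t : ℝ} (ht : 0 ≤ t) {A : Matrix (Fin n) (Fin n) ℂ}
    (hA : A.PosSemidef) : ((t : ℂ) • A).PosSemidef := by
  constructor
  · unfold Matrix.IsHermitian
    rw [conjTranspose_smul, hA.1.eq]
    congr 1
    simp [Complex.star_def, Complex.conj_ofReal]
  · intro x
    exact (hA.smul (Complex.zero_le_real.mpr ht)).2 x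

lemma smul_det_re {t : ℝ} {A : Matrix (Fin n) (Fin n) ℂ} (hA : A.PosSemidef) :
    ((t : ℂ) • A).det.re = t ^ n * A.det.re := by
  have h : ((t : ℂ) • A).det = ((t ^ n * A.det.re : ℝ) : ℂ) := by
    rw [det_smul, psd_det_coe hA]
    push_cast [Fintype.card_fin]
    simp
  rw [h, Complex.ofReal_re]

lemma rpow_pow_cancel {t d : ℝ} (ht : 0 ≤ t) (hd : 0 ≤ d) (hn : 0 < n) :
    (t ^ n * d) ^ ((1:ℝ)/n) = t * d ^ ((1:ℝ)/n) := by
  have hnR : ((n:ℝ)) ≠ 0 := Nat.cast_ne_zero.mpr hn.ne'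
  rw [Real.mul_rpow (by positivity) hd, ← Real.rpow_natCast t n,
    ← Real.rpow_mul ht, mul_one_div, div_self hnR, Real.rpow_one]


/-- Concavity of `A ↦ det(A)^(1/n)` on the cone of positive semidefinite Hermitian matrices. -/
theorem stmt2 (n : ℕ) (hn : 0 < n) (A B : Matrix (Fin n) (Fin n) ℂ)
    (hA : A.PosSemidef) (hB : B.PosSemidef) (t : ℝ) (ht0 : 0 ≤ t) (ht1 : t ≤ 1) :
    t * A.det.re ^ ((1 : ℝ) / n) + (1 - t) * B.det.re ^ ((1 : ℝ) / n)
      ≤ ((t : ℂ) • A + ((1 - t : ℝ) : ℂ) • B).det.re ^ ((1 : ℝ) / n) := by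
  have ht1' : (0:ℝ) ≤ 1 - t := by linarith
  have hMps := smul_posSemidef ht0 hA
  have hNps := smul_posSemidef ht1' hB
  have hmink := minkowski hn hMps hNps
  rw [smul_det_re hA, smul_det_re hB, rpow_pow_cancel ht0 (psd_det_re_nonneg hA) hn,
    rpow_pow_cancel ht1' (psd_det_re_nonneg hB) hn] at hmink
  exact hmink
end

section
/- For 2×2 positive semidefinite Hermitian matrices A, B with det(A) ≥ a and det(B) ≥ b (a, b ≥ 0), the mixed determinant D_1(A,B) := (det(A+B) − det(A) − det(B))/2 satisfies D_1(A,B) ≥ √(ab). -/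
open Matrix
open scoped ComplexOrder

lemma diag_re_nonneg {A : Matrix (Fin 2) (Fin 2) ℂ} (hA : A.PosSemidef) (i : Fin 2) :
    0 ≤ (A i i).re := by
  have := hA.re_dotProduct_nonneg (Pi.single i 1)
  simpa [dotProduct, mulVec, Pi.single_apply, Finset.sum_ite_eq] using this

lemma key_real (p q r s zn wn a b : ℝ) (hp : 0 ≤ p) (hq : 0 ≤ q) (hr : 0 ≤ r) (hs : 0 ≤ s)
    (hzn : 0 ≤ zn) (hwn : 0 ≤ wn) (ha : 0 ≤ a) (hb : 0 ≤ b)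
    (hA : a ≤ p * q - zn ^ 2) (hB : b ≤ r * s - wn ^ 2) :
    Real.sqrt (a * b) ≤ (p * s + q * r) / 2 - zn * wn := by
  set u := Real.sqrt (p * q) with hu
  set v := Real.sqrt (r * s) with hv
  have hu0 : 0 ≤ u := Real.sqrt_nonneg _
  have hv0 : 0 ≤ v := Real.sqrt_nonneg _
  have hu2 : u ^ 2 = p * q := Real.sq_sqrt (by positivity)
  have hv2 : v ^ 2 = r * s := Real.sq_sqrt (by positivity)
  have hzu : zn ≤ u := by nlinarith [sq_nonneg (u - zn), sq_nonneg (u + zn)]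
  have hwv : wn ≤ v := by nlinarith [sq_nonneg (v - wn), sq_nonneg (v + wn)]
  have huv : u * v ≤ (p * s + q * r) / 2 := by
    have h1 : Real.sqrt (p * s) * Real.sqrt (q * r) = u * v := by
      rw [hu, hv, ← Real.sqrt_mul (by positivity), ← Real.sqrt_mul (by positivity)]
      ring_nf
    have h2 : Real.sqrt (p * s) * Real.sqrt (q * r) ≤ (p * s + q * r) / 2 := by
      nlinarith [sq_nonneg (Real.sqrt (p * s) - Real.sqrt (q * r)),
        Real.sq_sqrt (mul_nonneg hp hs), Real.sq_sqrt (mul_nonneg hq hr),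
        Real.sqrt_nonneg (p * s), Real.sqrt_nonneg (q * r)]
    linarith [h1 ▸ h2]
  have hsq : Real.sqrt (a * b) ≤ u * v - zn * wn := by
    have h0 : 0 ≤ u * v - zn * wn := by nlinarith
    have hab : a * b ≤ (u * v - zn * wn) ^ 2 := by
      have hprod : a * b ≤ (p * q - zn ^ 2) * (r * s - wn ^ 2) :=
        mul_le_mul hA hB hb (by nlinarith)
      nlinarith [sq_nonneg (u * wn - v * zn)]
    calc Real.sqrt (a * b) ≤ Real.sqrt ((u * v - zn * wn) ^ 2) := Real.sqrt_le_sqrt hab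
      _ = u * v - zn * wn := Real.sqrt_sq h0
  linarith

/-- For 2×2 positive semidefinite Hermitian matrices `A`, `B` with `det A ≥ a ≥ 0` and
`det B ≥ b ≥ 0`, the mixed determinant `D₁(A,B) = (det(A+B) − det A − det B)/2`
satisfies `D₁(A,B) ≥ √(ab)`. -/
theorem stmt8 (A B : Matrix (Fin 2) (Fin 2) ℂ)
    (hA : A.PosSemidef) (hB : B.PosSemidef) (a b : ℝ) (ha : 0 ≤ a) (hb : 0 ≤ b)
    (hdetA : a ≤ A.det.re) (hdetB : b ≤ B.det.re) :
    Real.sqrt (a * b) ≤ ((A + B).det.re - A.det.re - B.det.re) / 2 := by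
  set p := (A 0 0).re with hpd
  set q := (A 1 1).re with hqd
  set r := (B 0 0).re with hrd
  set s := (B 1 1).re with hsd
  set z := A 0 1 with hz
  set w := B 0 1 with hw
  have hAh : A 1 0 = starRingEnd ℂ z := (hA.1.apply 1 0).symm
  have hBh : B 1 0 = starRingEnd ℂ w := (hB.1.apply 1 0).symm
  have hp : 0 ≤ p := diag_re_nonneg hA 0
  have hq : 0 ≤ q := diag_re_nonneg hA 1
  have hr : 0 ≤ r := diag_re_nonneg hB 0
  have hs : 0 ≤ s := diag_re_nonneg hB 1
  have hAim0 : (A 0 0).im = 0 := by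
    have := congrArg Complex.im (hA.1.apply 0 0)
    simp at this; linarith
  have hAim1 : (A 1 1).im = 0 := by
    have := congrArg Complex.im (hA.1.apply 1 1)
    simp at this; linarith
  have hBim0 : (B 0 0).im = 0 := by
    have := congrArg Complex.im (hB.1.apply 0 0)
    simp at this; linarith
  have hBim1 : (B 1 1).im = 0 := by
    have := congrArg Complex.im (hB.1.apply 1 1)
    simp at this; linarith
  have hdA : A.det.re = p * q - Complex.normSq z := by
    rw [Matrix.det_fin_two, hAh]
    simp [Complex.mul_re, Complex.normSq_apply, hAim0, hAim1, ← hz, ← hpd, ← hqd]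
  have hdB : B.det.re = r * s - Complex.normSq w := by
    rw [Matrix.det_fin_two, hBh]
    simp [Complex.mul_re, Complex.normSq_apply, hBim0, hBim1, ← hw, ← hrd, ← hsd]
  have hdAB : (A + B).det.re = (p + r) * (q + s) - Complex.normSq (z + w) := by
    rw [Matrix.det_fin_two]
    simp [Matrix.add_apply, hAh, hBh, ← map_add, Complex.mul_re, Complex.normSq_apply,
      hAim0, hAim1, hBim0, hBim1, ← hz, ← hw, ← hpd, ← hqd, ← hrd, ← hsd]
    ring
  have hre : (z * starRingEnd ℂ w).re ≤ ‖z‖ * ‖w‖ := by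
    calc (z * starRingEnd ℂ w).re ≤ ‖z * starRingEnd ℂ w‖ := Complex.re_le_norm _
      _ = ‖z‖ * ‖w‖ := by rw [norm_mul, Complex.norm_conj]
  have hkey := key_real p q r s (‖z‖) (‖w‖) a b hp hq hr hs
    (norm_nonneg z) (norm_nonneg w) ha hb
    (by rw [Complex.sq_norm]; linarith [hdA ▸ hdetA])
    (by rw [Complex.sq_norm]; linarith [hdB ▸ hdetB])
  rw [hdA, hdB, hdAB, Complex.normSq_add]
  nlinarith [hkey, hre]
end

section
/- Define the convex piecewise-linear function ũ(x,y) = max{x/k, k²y, −j} on ℝ² for real k > 0 and j > 0. The subgradient image of ũ over the quadrant {x ≤ 0, y ≤ 0} (i.e. the union of subdifferentials ∂ũ(w) over w in the quadrant) equals the closed triangle with vertices (1/k, 0), (0, k²), (0, 0), and its Lebesgue measure is k/2. -/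
open MeasureTheory Set

lemma convex_S (k : ℝ) (hk : 0 < k) :
    Convex ℝ {t : ℝ × ℝ | 0 ≤ t.1 ∧ 0 ≤ t.2 ∧ k * t.1 + t.2 / k ^ 2 ≤ 1} := by
  intro p hp q hq a b ha hb hab
  obtain ⟨hp1, hp2, hp3⟩ := hp
  obtain ⟨hq1, hq2, hq3⟩ := hq
  refine ⟨?_, ?_, ?_⟩
  · simpa using add_nonneg (mul_nonneg ha hp1) (mul_nonneg hb hq1)
  · simpa using add_nonneg (mul_nonneg ha hp2) (mul_nonneg hb hq2)
  · have h1 := mul_le_mul_of_nonneg_left hp3 ha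
    have h2 := mul_le_mul_of_nonneg_left hq3 hb
    simp only [Prod.fst_add, Prod.snd_add, Prod.smul_fst, Prod.smul_snd, smul_eq_mul, mem_setOf_eq]
    have hk2 : (0:ℝ) < k ^ 2 := by positivity
    have e : k * (a * p.1 + b * q.1) + (a * p.2 + b * q.2) / k ^ 2
        = a * (k * p.1 + p.2 / k ^ 2) + b * (k * q.1 + q.2 / k ^ 2) := by ring
    rw [e]; linarith

lemma triangle_eq (k : ℝ) (hk : 0 < k) :
    convexHull ℝ {((1 / k : ℝ), (0 : ℝ)), ((0 : ℝ), k ^ 2), ((0 : ℝ), (0 : ℝ))}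
      = {t : ℝ × ℝ | 0 ≤ t.1 ∧ 0 ≤ t.2 ∧ k * t.1 + t.2 / k ^ 2 ≤ 1} := by
  have hk0 : k ≠ 0 := hk.ne'
  apply Subset.antisymm
  · apply convexHull_min _ (convex_S k hk)
    rintro x hx
    simp only [mem_insert_iff, mem_singleton_iff] at hx
    rcases hx with h | h | h <;> subst h <;>
      refine ⟨by positivity, by positivity, by field_simp; nlinarith [sq_nonneg k]⟩
  · rintro t ⟨h1, h2, h3⟩
    have hs := (convex_convexHull ℝ
        ({((1 / k : ℝ), (0 : ℝ)), ((0 : ℝ), k ^ 2), ((0 : ℝ), (0 : ℝ))} : Set (ℝ × ℝ))).sum_mem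
      (t := Finset.univ)
      (w := ![k * t.1, t.2 / k ^ 2, 1 - k * t.1 - t.2 / k ^ 2])
      (z := ![((1 / k : ℝ), (0 : ℝ)), ((0 : ℝ), k ^ 2), ((0 : ℝ), (0 : ℝ))])
      (fun i _ => by
        fin_cases i <;> simp <;> first
          | positivity
          | exact mul_nonneg hk.le h1
          | exact div_nonneg h2 (by positivity)
          | linarith)
      (by simp [Fin.sum_univ_three])
      (fun i _ => by fin_cases i <;> exact subset_convexHull ℝ _ (by simp))
    convert hs using 1
    simp only [Fin.sum_univ_three, Matrix.cons_val_zero, Matrix.cons_val_one, Matrix.head_cons,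
      Matrix.cons_val_two, Matrix.tail_cons, Prod.smul_mk, smul_eq_mul]
    ext <;> simp <;> field_simp

lemma vol_S (k : ℝ) (hk : 0 < k) :
    volume {t : ℝ × ℝ | 0 ≤ t.1 ∧ 0 ≤ t.2 ∧ k * t.1 + t.2 / k ^ 2 ≤ 1}
      = ENNReal.ofReal (k / 2) := by
  have hk0 : k ≠ 0 := hk.ne'
  set S : Set (ℝ × ℝ) := {t : ℝ × ℝ | 0 ≤ t.1 ∧ 0 ≤ t.2 ∧ k * t.1 + t.2 / k ^ 2 ≤ 1} with hS
  set g : ℝ → ℝ := fun x => k ^ 2 - k ^ 3 * x with hg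
  set R : Set (ℝ × ℝ) := regionBetween 0 g (Icc 0 (1 / k)) with hR
  have hk2 : (0:ℝ) < k ^ 2 := by positivity
  -- convexity of S
  have hconv : Convex ℝ S := by
    intro p hp q hq a b ha hb hab
    obtain ⟨hp1, hp2, hp3⟩ := hp
    obtain ⟨hq1, hq2, hq3⟩ := hq
    refine ⟨?_, ?_, ?_⟩
    · simpa using add_nonneg (mul_nonneg ha hp1) (mul_nonneg hb hq1)
    · simpa using add_nonneg (mul_nonneg ha hp2) (mul_nonneg hb hq2)
    · have h1 := mul_le_mul_of_nonneg_left hp3 ha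
      have h2 := mul_le_mul_of_nonneg_left hq3 hb
      simp only [Prod.fst_add, Prod.snd_add, Prod.smul_fst, Prod.smul_snd, smul_eq_mul,
        mem_setOf_eq]
      have e : k * (a * p.1 + b * q.1) + (a * p.2 + b * q.2) / k ^ 2
          = a * (k * p.1 + p.2 / k ^ 2) + b * (k * q.1 + q.2 / k ^ 2) := by ring
      rw [e]; linarith
  -- R ⊆ S
  have hRS : R ⊆ S := by
    rintro ⟨x, y⟩ ⟨⟨hx0, hx1⟩, hy0, hy1⟩
    simp only [hg, Pi.zero_apply] at hy0 hy1
    refine ⟨hx0, hy0.le, ?_⟩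
    have h' : y / k ^ 2 ≤ 1 - k * x := by rw [div_le_iff₀ hk2]; nlinarith
    simpa using by linarith [h'] 
  -- interior S ⊆ R
  have hIR : interior S ⊆ R := by
    intro p hp
    obtain ⟨ε, hε, hball⟩ := Metric.isOpen_iff.mp isOpen_interior p hp
    have hpS : p ∈ S := interior_subset hp
    obtain ⟨h1, h2, h3⟩ := hpS
    have hmem : ∀ δ : ℝ, |δ| < ε → (p.1, p.2 + δ) ∈ S := by
      intro δ hδ
      apply interior_subset; apply hball
      rw [Metric.mem_ball, Prod.dist_eq]
      refine max_lt (by simpa using hε) ?_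
      rw [Real.dist_eq]
      simpa using hδ
    have hup := hmem (ε / 2) (by rw [abs_of_pos (by linarith)]; linarith)
    have hdn := hmem (-(ε / 2)) (by rw [abs_of_neg (by linarith)]; linarith)
    obtain ⟨_, hdn2, _⟩ := hdn
    obtain ⟨_, _, hup3⟩ := hup
    simp only [mem_setOf_eq] at hdn2 hup3
    refine ⟨⟨h1, ?_⟩, ?_, ?_⟩
    · rw [le_div_iff₀ hk]
      have : 0 ≤ p.2 / k ^ 2 := div_nonneg h2 hk2.le
      linarith
    · simp only [Pi.zero_apply]; linarith
    · simp only [hg, mem_Ioo]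
      have h' : (p.2 + ε / 2) / k ^ 2 ≤ 1 - k * p.1 := by linarith
      rw [div_le_iff₀ hk2] at h'
      nlinarith
  -- volume of R
  have hvolR : volume R = ENNReal.ofReal (k / 2) := by
    have hg_int : IntegrableOn g (Icc 0 (1 / k)) volume :=
      (Continuous.integrableOn_Icc (by continuity))
    have h0_int : IntegrableOn (0 : ℝ → ℝ) (Icc 0 (1 / k)) volume := integrableOn_zero
    have h0g : ∀ x ∈ Icc (0:ℝ) (1 / k), (0:ℝ) ≤ g x := by
      rintro x ⟨hx0, hx1⟩
      simp only [hg]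
      rw [le_div_iff₀ hk] at hx1
      nlinarith
    rw [hR, MeasureTheory.Measure.volume_eq_prod,
      volume_regionBetween_eq_integral h0_int hg_int measurableSet_Icc h0g]
    congr 1
    have hgx : ∀ x, (g - 0) x = k ^ 2 - k ^ 3 * x := by intro x; simp [hg]
    rw [setIntegral_congr_fun measurableSet_Icc (fun x _ => hgx x),
      integral_Icc_eq_integral_Ioc,
      ← intervalIntegral.integral_of_le (by positivity : (0:ℝ) ≤ 1 / k)]
    have hint1 : IntervalIntegrable (fun _ : ℝ => k ^ 2) volume 0 (1 / k) :=
      intervalIntegrable_const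
    have hint2 : IntervalIntegrable (fun x : ℝ => k ^ 3 * x) volume 0 (1 / k) :=
      (continuous_const.mul continuous_id).intervalIntegrable _ _
    rw [intervalIntegral.integral_sub hint1 hint2, intervalIntegral.integral_const,
      intervalIntegral.integral_const_mul, integral_id]
    field_simp
    have hkk : k ^ 2 * k⁻¹ = k := by rw [pow_two, mul_assoc, mul_inv_cancel₀ hk0, mul_one]
    ring_nf
    linarith
  -- sandwich
  have h1 : volume R ≤ volume S := measure_mono hRS
  have h2 : volume S ≤ volume R := by
    calc volume S ≤ volume (closure S) := measure_mono subset_closure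
      _ ≤ volume (interior S) + volume (frontier S) := by
          rw [closure_eq_interior_union_frontier]; exact measure_union_le _ _
      _ = volume (interior S) := by rw [hconv.addHaar_frontier volume, add_zero]
      _ ≤ volume R := measure_mono hIR
  rw [le_antisymm h2 h1, hvolR]

/-- The subgradient image of `ũ(x,y) = max{x/k, k²y, −j}` over the quadrant
`{x ≤ 0, y ≤ 0}` is the closed triangle with vertices `(1/k, 0)`, `(0, k²)`, `(0, 0)`,
and its Lebesgue measure is `k/2`. -/
theorem stmt9 (k j : ℝ) (hk : 0 < k) (hj : 0 < j) :
    (⋃ w ∈ {w : ℝ × ℝ | w.1 ≤ 0 ∧ w.2 ≤ 0},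
        {t : ℝ × ℝ | ∀ s : ℝ × ℝ,
          max (max (w.1 / k) (k ^ 2 * w.2)) (-j) + ((s.1 - w.1) * t.1 + (s.2 - w.2) * t.2)
            ≤ max (max (s.1 / k) (k ^ 2 * s.2)) (-j)})
      = convexHull ℝ {((1 / k : ℝ), (0 : ℝ)), ((0 : ℝ), k ^ 2), ((0 : ℝ), (0 : ℝ))}
    ∧ volume (convexHull ℝ {((1 / k : ℝ), (0 : ℝ)), ((0 : ℝ), k ^ 2), ((0 : ℝ), (0 : ℝ))})
        = ENNReal.ofReal (k / 2) := by
  have hk0 : k ≠ 0 := hk.ne'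
  have hk2 : (0:ℝ) < k ^ 2 := by positivity
  rw [triangle_eq k hk]
  constructor
  · apply Subset.antisymm
    · -- union ⊆ S
      intro t ht
      rw [mem_iUnion₂] at ht
      obtain ⟨w, ⟨hw1, hw2⟩, ht⟩ := ht
      refine ⟨?_, ?_, ?_⟩
      · have h := ht (w.1 - 1, w.2)
        simp only at h
        have hle : max (max ((w.1 - 1) / k) (k ^ 2 * w.2)) (-j)
            ≤ max (max (w.1 / k) (k ^ 2 * w.2)) (-j) := by
          refine max_le_max (max_le_max ?_ le_rfl) le_rfl
          gcongr
          linarith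
        linarith
      · have h := ht (w.1, w.2 - 1)
        simp only at h
        have hle : max (max (w.1 / k) (k ^ 2 * (w.2 - 1))) (-j)
            ≤ max (max (w.1 / k) (k ^ 2 * w.2)) (-j) := by
          refine max_le_max (max_le_max le_rfl ?_) le_rfl
          nlinarith
        linarith
      · have h := ht (w.1 + k, w.2 + 1 / k ^ 2)
        simp only at h
        have e1 : (w.1 + k) / k = w.1 / k + 1 := by field_simp
        have e2 : k ^ 2 * (w.2 + 1 / k ^ 2) = k ^ 2 * w.2 + 1 := by field_simp
        have m1 : w.1 / k ≤ max (max (w.1 / k) (k ^ 2 * w.2)) (-j) :=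
          le_trans (le_max_left _ _) (le_max_left _ _)
        have m2 : k ^ 2 * w.2 ≤ max (max (w.1 / k) (k ^ 2 * w.2)) (-j) :=
          le_trans (le_max_right _ _) (le_max_left _ _)
        have m3 : -j ≤ max (max (w.1 / k) (k ^ 2 * w.2)) (-j) := le_max_right _ _
        have hle : max (max ((w.1 + k) / k) (k ^ 2 * (w.2 + 1 / k ^ 2))) (-j)
            ≤ max (max (w.1 / k) (k ^ 2 * w.2)) (-j) + 1 := by
          rw [e1, e2]
          exact max_le (max_le (by linarith) (by linarith)) (by linarith)
        have e3 : (w.1 + k - w.1) * t.1 + (w.2 + 1 / k ^ 2 - w.2) * t.2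
            = k * t.1 + t.2 / k ^ 2 := by ring
        rw [e3] at h
        linarith
    · -- S ⊆ union
      rintro t ⟨h1, h2, h3⟩
      rw [mem_iUnion₂]
      refine ⟨(-(j * k), -(j / k ^ 2)), ⟨by simp; positivity, by simp; positivity⟩, ?_⟩
      intro s
      simp only
      have e0 : max (max (-(j * k) / k) (k ^ 2 * -(j / k ^ 2))) (-j) = -j := by
        rw [show -(j * k) / k = -j by field_simp,
          show k ^ 2 * -(j / k ^ 2) = -j by field_simp]
        simp
      rw [e0]
      have hA : s.1 / k ≤ max (max (s.1 / k) (k ^ 2 * s.2)) (-j) :=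
        le_trans (le_max_left _ _) (le_max_left _ _)
      have hB : k ^ 2 * s.2 ≤ max (max (s.1 / k) (k ^ 2 * s.2)) (-j) :=
        le_trans (le_max_right _ _) (le_max_left _ _)
      have hC : -j ≤ max (max (s.1 / k) (k ^ 2 * s.2)) (-j) := le_max_right _ _
      have key : -j + ((s.1 - -(j * k)) * t.1 + (s.2 - -(j / k ^ 2)) * t.2)
          = (k * t.1) * (s.1 / k) + (t.2 / k ^ 2) * (k ^ 2 * s.2)
            + (1 - k * t.1 - t.2 / k ^ 2) * (-j) := by
        field_simp
        ring
      rw [key]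
      have p1 := mul_le_mul_of_nonneg_left hA (mul_nonneg hk.le h1)
      have p2 := mul_le_mul_of_nonneg_left hB (div_nonneg h2 hk2.le)
      have p3 := mul_le_mul_of_nonneg_left hC (by linarith : (0:ℝ) ≤ 1 - k * t.1 - t.2 / k ^ 2)
      linarith
  · exact vol_S k hk
end

section
/- Let μ be a positive measure on a cube I, f, g ∈ L^1(μ) nonnegative, and let I be partitioned into boxes I_1, …, I_N of positive Lebesgue measure. Define ν := Σ_j (∫_{I_j} f dμ)^{k/n}(∫_{I_j} g dμ)^{(n-k)/n} / λ(I_j) · χ_{I_j} λ. Then ν ≥ Σ_j (∫_{I_j} f^{k/n} g^{(n-k)/n} dμ)/λ(I_j) · χ_{I_j} λ, and as the partition is refined (with mesh → 0 and boundaries μ-null) the right-hand side converges weakly* to f^{k/n} g^{(n-k)/n} μ. -/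
open MeasureTheory Filter Topology
open scoped ENNReal NNReal

private lemma holder_aux {α : Type*} [MeasurableSpace α] (ν : Measure α) {f g : α → ℝ}
    (hf : Integrable f ν) (hg : Integrable g ν) (hf0 : 0 ≤ f) (hg0 : 0 ≤ g)
    {a b : ℝ} (ha : 0 < a) (hb : 0 < b) (hab : a + b = 1) :
    ∫ x, f x ^ a * g x ^ b ∂ν ≤ (∫ x, f x ∂ν) ^ a * (∫ x, g x ∂ν) ^ b := by
  have ha1 : a < 1 := by linarith
  have hpq : (1/a).HolderConjugate (1/b) := ⟨by
    rw [one_div, one_div, inv_inv, inv_inv, inv_one]; exact hab, one_div_pos.2 ha, one_div_pos.2 hb⟩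
  have hfa := hf.1.aemeasurable
  have hga := hg.1.aemeasurable
  have hFm : AEMeasurable (fun x => ENNReal.ofReal (f x) ^ a) ν :=
    hfa.ennreal_ofReal.pow_const a
  have hGm : AEMeasurable (fun x => ENNReal.ofReal (g x) ^ b) ν :=
    hga.ennreal_ofReal.pow_const b
  have key := ENNReal.lintegral_mul_le_Lp_mul_Lq ν hpq hFm hGm
  have hfp : ∀ x : α, (ENNReal.ofReal (f x) ^ a) ^ (1/a) = ENNReal.ofReal (f x) := fun x => by
    rw [← ENNReal.rpow_mul, mul_one_div_cancel ha.ne', ENNReal.rpow_one]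
  have hgp : ∀ x : α, (ENNReal.ofReal (g x) ^ b) ^ (1/b) = ENNReal.ofReal (g x) := fun x => by
    rw [← ENNReal.rpow_mul, mul_one_div_cancel hb.ne', ENNReal.rpow_one]
  simp only [Pi.mul_apply, hfp, hgp, one_div_one_div] at key
  rw [← ofReal_integral_eq_lintegral_ofReal hf (ae_of_all _ hf0),
      ← ofReal_integral_eq_lintegral_ofReal hg (ae_of_all _ hg0)] at key
  have hne : (ENNReal.ofReal (∫ x, f x ∂ν)) ^ a * (ENNReal.ofReal (∫ x, g x ∂ν)) ^ b ≠ ⊤ :=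
    ENNReal.mul_ne_top (ENNReal.rpow_ne_top_of_nonneg ha.le ENNReal.ofReal_ne_top)
      (ENNReal.rpow_ne_top_of_nonneg hb.le ENNReal.ofReal_ne_top)
  have hmono := ENNReal.toReal_mono hne key
  have hsm : AEStronglyMeasurable (fun x => f x ^ a * g x ^ b) ν := by
    have h1 : AEMeasurable (fun x => f x ^ a * g x ^ b) ν := by fun_prop
    exact h1.aestronglyMeasurable
  rw [integral_eq_lintegral_of_nonneg_ae
    (ae_of_all _ fun x => mul_nonneg (Real.rpow_nonneg (hf0 x) a) (Real.rpow_nonneg (hg0 x) b)) hsm]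
  have heq : (∫⁻ x, ENNReal.ofReal (f x ^ a * g x ^ b) ∂ν)
      = ∫⁻ x, ENNReal.ofReal (f x) ^ a * ENNReal.ofReal (g x) ^ b ∂ν := by
    refine lintegral_congr fun x => ?_
    rw [ENNReal.ofReal_mul (Real.rpow_nonneg (hf0 x) a),
      ENNReal.ofReal_rpow_of_nonneg (hf0 x) ha.le, ENNReal.ofReal_rpow_of_nonneg (hg0 x) hb.le]
  rw [heq]
  refine hmono.trans_eq ?_
  rw [ENNReal.toReal_mul, ← ENNReal.toReal_rpow, ← ENNReal.toReal_rpow,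
    ENNReal.toReal_ofReal (integral_nonneg hf0), ENNReal.toReal_ofReal (integral_nonneg hg0)]

set_option maxHeartbeats 1600000 in
private lemma approx_aux {m : ℕ} (μ : Measure (Fin m → ℝ)) [IsFiniteMeasure μ]
    (I : Set (Fin m → ℝ)) (hI : IsCompact I) (hμI : μ Iᶜ = 0)
    {φ : (Fin m → ℝ) → ℝ} (hφ0 : ∀ x, 0 ≤ φ x) (hφint : Integrable φ μ)
    (cells : ℕ → ℕ → Set (Fin m → ℝ))
    (hmeas : ∀ p j, MeasurableSet (cells p j))
    (hdisj : ∀ p, Pairwise fun i j => Disjoint (cells p i) (cells p j))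
    (hcover : ∀ p, (⋃ j, cells p j) = I)
    (hpos : ∀ p j, 0 < volume (cells p j)) (hfin : ∀ p j, volume (cells p j) < ⊤)
    (mesh : ℕ → ℝ) (hmesh : Tendsto mesh atTop (𝓝 0))
    (hdiam : ∀ p j, Metric.diam (cells p j) ≤ mesh p)
    (χ : (Fin m → ℝ) → ℝ) (hχc : Continuous χ) (hχs : HasCompactSupport χ) :
    Tendsto (fun p => ∫ x, χ x ∂(Measure.sum fun j =>
        (ENNReal.ofReal (∫ x in cells p j, φ x ∂μ) / volume (cells p j)) •
          volume.restrict (cells p j))) atTop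
      (𝓝 (∫ x, χ x ∂(μ.withDensity fun x => ENNReal.ofReal (φ x)))) := by
  classical
  have hrI : μ.restrict I = μ := Measure.restrict_eq_self_of_ae_mem (by
    rw [ae_iff]; exact hμI)
  obtain ⟨C, hC⟩ := hχs.exists_bound_of_continuous hχc
  have hχφ : Integrable (fun x => χ x * φ x) μ :=
    hφint.bdd_mul hχc.aestronglyMeasurable (ae_of_all _ hC)
  have hA0 : ∀ p j, 0 ≤ ∫ x in cells p j, φ x ∂μ := fun p j =>
    setIntegral_nonneg (hmeas p j) fun x _ => hφ0 x
  have hAhs : ∀ p, HasSum (fun j => ∫ x in cells p j, φ x ∂μ) (∫ x, φ x ∂μ) := fun p => by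
    have h := hasSum_integral_iUnion (μ := μ) (f := φ) (hmeas p) (hdisj p)
      (by rw [hcover p]; exact hφint.integrableOn)
    rwa [hcover p, hrI] at h
  have hχφhs : ∀ p, HasSum (fun j => ∫ x in cells p j, χ x * φ x ∂μ) (∫ x, χ x * φ x ∂μ) :=
    fun p => by
    have h := hasSum_integral_iUnion (μ := μ) (f := fun x => χ x * φ x) (hmeas p) (hdisj p)
      (by rw [hcover p]; exact hχφ.integrableOn)
    rwa [hcover p, hrI] at h
  have hsumA : ∀ p, Summable fun j => ∫ x in cells p j, φ x ∂μ := fun p => (hAhs p).summable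
  have hν_univ : ∀ p, (Measure.sum fun j =>
      (ENNReal.ofReal (∫ x in cells p j, φ x ∂μ) / volume (cells p j)) •
        volume.restrict (cells p j)) Set.univ = ENNReal.ofReal (∫ x, φ x ∂μ) := fun p => by
    rw [Measure.sum_apply _ MeasurableSet.univ]
    have h : ∀ j, ((ENNReal.ofReal (∫ x in cells p j, φ x ∂μ) / volume (cells p j)) •
        volume.restrict (cells p j)) Set.univ
        = ENNReal.ofReal (∫ x in cells p j, φ x ∂μ) := fun j => by
      rw [Measure.smul_apply, smul_eq_mul, Measure.restrict_apply MeasurableSet.univ,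
        Set.univ_inter, ENNReal.div_mul_cancel (hpos p j).ne' (hfin p j).ne]
    rw [tsum_congr h, ← ENNReal.ofReal_tsum_of_nonneg (hA0 p) (hsumA p), (hAhs p).tsum_eq]
  have hνfin : ∀ p, IsFiniteMeasure (Measure.sum fun j =>
      (ENNReal.ofReal (∫ x in cells p j, φ x ∂μ) / volume (cells p j)) •
        volume.restrict (cells p j)) := fun p =>
    ⟨by rw [hν_univ p]; exact ENNReal.ofReal_lt_top⟩
  have hχint : ∀ p, Integrable χ (Measure.sum fun j =>
      (ENNReal.ofReal (∫ x in cells p j, φ x ∂μ) / volume (cells p j)) •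
        volume.restrict (cells p j)) := fun p => by
    have := hνfin p
    exact hχc.integrable_of_hasCompactSupport hχs
  have hS1 : ∀ p j, ∫ x, χ x ∂((ENNReal.ofReal (∫ x in cells p j, φ x ∂μ) / volume (cells p j)) •
      volume.restrict (cells p j))
      = ((∫ x in cells p j, φ x ∂μ) / (volume (cells p j)).toReal) * ∫ x in cells p j, χ x :=
    fun p j => by
    rw [integral_smul_measure, smul_eq_mul, ENNReal.toReal_div, ENNReal.toReal_ofReal (hA0 p j)]
  have hνint : ∀ p, ∫ x, χ x ∂(Measure.sum fun j =>
      (ENNReal.ofReal (∫ x in cells p j, φ x ∂μ) / volume (cells p j)) •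
        volume.restrict (cells p j))
      = ∑' j, ((∫ x in cells p j, φ x ∂μ) / (volume (cells p j)).toReal)
          * ∫ x in cells p j, χ x := fun p => by
    rw [integral_sum_measure (hχint p)]; exact tsum_congr (hS1 p)
  have hS1sum : ∀ p, Summable fun j =>
      ((∫ x in cells p j, φ x ∂μ) / (volume (cells p j)).toReal) * ∫ x in cells p j, χ x :=
    fun p => ((hasSum_integral_measure (hχint p)).summable).congr (hS1 p)
  -- the limit value
  have hL : (∫ x, χ x ∂(μ.withDensity fun x => ENNReal.ofReal (φ x)))
      = ∫ x, χ x * φ x ∂μ := by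
    have hd : (fun x => ENNReal.ofReal (φ x))
        = fun x => ((Real.toNNReal (φ x) : ℝ≥0) : ℝ≥0∞) := rfl
    rw [hd, integral_withDensity_eq_integral_smul₀ hφint.1.aemeasurable.real_toNNReal χ]
    refine integral_congr_ae (ae_of_all _ fun x => ?_)
    simp [NNReal.smul_def, Real.coe_toNNReal _ (hφ0 x), mul_comm]
  -- main estimate
  rw [Metric.tendsto_atTop]
  intro ε hε
  set T := ∫ x, φ x ∂μ with hT
  have hT0 : 0 ≤ T := integral_nonneg fun x => hφ0 x
  have hε' : 0 < ε / (T + 1) := div_pos hε (by linarith)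
  obtain ⟨δ, hδ0, hδ⟩ := Metric.uniformContinuous_iff.1
    (hχs.uniformContinuous_of_continuous hχc) _ hε'
  obtain ⟨N, hN⟩ := Metric.tendsto_atTop.1 hmesh δ hδ0
  refine ⟨N, fun p hp => ?_⟩
  have hmp : mesh p < δ := by
    have h := hN p hp; rw [Real.dist_eq, sub_zero] at h
    exact lt_of_le_of_lt (le_abs_self _) h
  have hIb := hI.isBounded
  have hsub : ∀ j, cells p j ⊆ I := fun j => (hcover p) ▸ Set.subset_iUnion (cells p) j
  have hcb : ∀ j, ∀ x ∈ cells p j, ∀ y ∈ cells p j, ‖χ y - χ x‖ ≤ ε / (T + 1) := by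
    intro j x hx y hy
    have hdxy : dist y x < δ :=
      lt_of_le_of_lt (le_trans (Metric.dist_le_diam_of_mem (hIb.subset (hsub j)) hy hx)
        (hdiam p j)) hmp
    have h2 := hδ hdxy
    rw [Real.dist_eq] at h2
    rw [Real.norm_eq_abs]
    exact h2.le
  have hvpos : ∀ j, 0 < (volume (cells p j)).toReal := fun j =>
    ENNReal.toReal_pos (hpos p j).ne' (hfin p j).ne
  have hχcellint : ∀ j, IntegrableOn χ (cells p j) volume :=
    fun j => (hχc.integrable_of_hasCompactSupport hχs).integrableOn
  have hbavg : ∀ j, ∀ x ∈ cells p j,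
      |(∫ y in cells p j, χ y) / (volume (cells p j)).toReal - χ x| ≤ ε / (T + 1) := by
    intro j x hx
    have hsubint : ∫ y in cells p j, (χ y - χ x)
        = (∫ y in cells p j, χ y) - χ x * (volume (cells p j)).toReal := by
      rw [integral_sub (hχcellint j) (integrableOn_const (hfin p j).ne),
        setIntegral_const, smul_eq_mul, mul_comm]; rfl
    have hnorm : ‖∫ y in cells p j, (χ y - χ x)‖
        ≤ (ε / (T + 1)) * (volume (cells p j)).toReal :=
      by have := norm_setIntegral_le_of_norm_le_const (hfin p j) (fun y hy => hcb j x hx y hy)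
         exact this
    rw [hsubint, Real.norm_eq_abs] at hnorm
    have hv := hvpos j
    have heq : (∫ y in cells p j, χ y) / (volume (cells p j)).toReal - χ x
        = ((∫ y in cells p j, χ y) - χ x * (volume (cells p j)).toReal)
          / (volume (cells p j)).toReal := by
      field_simp
    rw [heq, abs_div, abs_of_pos hv, div_le_iff₀ hv]
    exact hnorm
  have hterm : ∀ j,
      |((∫ x in cells p j, φ x ∂μ) / (volume (cells p j)).toReal) * (∫ x in cells p j, χ x)
        - ∫ x in cells p j, χ x * φ x ∂μ|
      ≤ (ε / (T + 1)) * ∫ x in cells p j, φ x ∂μ := by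
    intro j
    set b : ℝ := (∫ y in cells p j, χ y) / (volume (cells p j)).toReal with hb
    have hfirst : ((∫ x in cells p j, φ x ∂μ) / (volume (cells p j)).toReal)
        * (∫ x in cells p j, χ x) = ∫ x in cells p j, b * φ x ∂μ := by
      rw [integral_const_mul]; ring
    have hbφint : IntegrableOn (fun x => b * φ x) (cells p j) μ :=
      (hφint.const_mul b).integrableOn
    have hχφint : IntegrableOn (fun x => χ x * φ x) (cells p j) μ := hχφ.integrableOn
    have hdiffint : IntegrableOn (fun x => (b - χ x) * φ x) (cells p j) μ := by
      have h : (fun x => (b - χ x) * φ x) = fun x => b * φ x - χ x * φ x := by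
        funext x; ring
      rw [h]; exact hbφint.sub hχφint
    have hsplit : ((∫ x in cells p j, φ x ∂μ) / (volume (cells p j)).toReal)
        * (∫ x in cells p j, χ x) - ∫ x in cells p j, χ x * φ x ∂μ
        = ∫ x in cells p j, (b - χ x) * φ x ∂μ := by
      rw [hfirst, ← integral_sub hbφint hχφint]
      refine integral_congr_ae (ae_of_all _ fun x => ?_); ring
    rw [hsplit]
    have habs : |∫ x in cells p j, (b - χ x) * φ x ∂μ|
        ≤ ∫ x in cells p j, |(b - χ x) * φ x| ∂μ := by
      have h := norm_integral_le_integral_norm (μ := μ.restrict (cells p j))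
        (f := fun x => (b - χ x) * φ x)
      simpa only [Real.norm_eq_abs] using h
    refine habs.trans ?_
    calc ∫ x in cells p j, |(b - χ x) * φ x| ∂μ
        ≤ ∫ x in cells p j, (ε / (T + 1)) * φ x ∂μ := by
          refine setIntegral_mono_on hdiffint.abs
            ((hφint.const_mul (ε / (T + 1))).integrableOn) (hmeas p j) fun x hx => ?_
          rw [abs_mul, abs_of_nonneg (hφ0 x)]
          exact mul_le_mul_of_nonneg_right (hbavg j x hx) (hφ0 x)
      _ = (ε / (T + 1)) * ∫ x in cells p j, φ x ∂μ := integral_const_mul _ _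
  have hsum2 : Summable fun j => ∫ x in cells p j, χ x * φ x ∂μ := (hχφhs p).summable
  have hdiffeq : ∫ x, χ x ∂(Measure.sum fun j =>
      (ENNReal.ofReal (∫ x in cells p j, φ x ∂μ) / volume (cells p j)) •
        volume.restrict (cells p j))
      - ∫ x, χ x ∂(μ.withDensity fun x => ENNReal.ofReal (φ x))
      = ∑' j, (((∫ x in cells p j, φ x ∂μ) / (volume (cells p j)).toReal)
          * (∫ x in cells p j, χ x) - ∫ x in cells p j, χ x * φ x ∂μ) := by
    rw [hνint p, hL, ← (hχφhs p).tsum_eq]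
    exact (Summable.tsum_sub (hS1sum p) hsum2).symm
  have hsummaj : Summable fun j => (ε / (T + 1)) * ∫ x in cells p j, φ x ∂μ :=
    (hsumA p).mul_left _
  have habs_sum : Summable fun j =>
      |((∫ x in cells p j, φ x ∂μ) / (volume (cells p j)).toReal) * (∫ x in cells p j, χ x)
        - ∫ x in cells p j, χ x * φ x ∂μ| :=
    Summable.of_nonneg_of_le (fun j => abs_nonneg _) hterm hsummaj
  rw [Real.dist_eq, hdiffeq]
  have hfinal : |∑' j, (((∫ x in cells p j, φ x ∂μ) / (volume (cells p j)).toReal)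
          * (∫ x in cells p j, χ x) - ∫ x in cells p j, χ x * φ x ∂μ)|
      ≤ ∑' j, |((∫ x in cells p j, φ x ∂μ) / (volume (cells p j)).toReal)
          * (∫ x in cells p j, χ x) - ∫ x in cells p j, χ x * φ x ∂μ| := by
    have h := norm_tsum_le_tsum_norm (f := fun j =>
      ((∫ x in cells p j, φ x ∂μ) / (volume (cells p j)).toReal)
        * (∫ x in cells p j, χ x) - ∫ x in cells p j, χ x * φ x ∂μ)
      (by simpa only [Real.norm_eq_abs] using habs_sum)
    simpa only [Real.norm_eq_abs] using h
  refine lt_of_le_of_lt (hfinal.trans (Summable.tsum_le_tsum hterm habs_sum hsummaj)) ?_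
  have h3 : ∑' j, (ε / (T + 1)) * ∫ x in cells p j, φ x ∂μ = (ε / (T + 1)) * T := by
    rw [tsum_mul_left, (hAhs p).tsum_eq]
  rw [h3]
  have h1 : (ε / (T + 1)) * T < (ε / (T + 1)) * (T + 1) :=
    mul_lt_mul_of_pos_left (by linarith) hε'
  have h2 : (ε / (T + 1)) * (T + 1) = ε := div_mul_cancel₀ _ (by linarith)
  linarith

/-- Hölder's inequality on each cell plus weak* convergence of the canonical approximants:
the discretized measure built from `(∫_{Iⱼ} f dμ)^(k/n) (∫_{Iⱼ} g dμ)^((n-k)/n)` dominates the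
one built from `∫_{Iⱼ} f^(k/n) g^((n-k)/n) dμ`, and as the partitions refine (mesh → 0,
`μ`-null boundaries) the latter converges weakly* to `f^(k/n) g^((n-k)/n) μ`. -/
theorem stmt16 {m : ℕ} (μ : Measure (Fin m → ℝ)) [IsFiniteMeasure μ]
    (I : Set (Fin m → ℝ)) (hI : IsCompact I) (hμI : μ Iᶜ = 0)
    (f g : (Fin m → ℝ) → ℝ) (hf : Integrable f μ) (hg : Integrable g μ)
    (hf0 : 0 ≤ f) (hg0 : 0 ≤ g) (n k : ℕ) (hk1 : 1 ≤ k) (hkn : k ≤ n - 1)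
    (cells : ℕ → ℕ → Set (Fin m → ℝ))
    (hmeas : ∀ p j, MeasurableSet (cells p j))
    (hdisj : ∀ p, Pairwise fun i j => Disjoint (cells p i) (cells p j))
    (hcover : ∀ p, (⋃ j, cells p j) = I)
    (hpos : ∀ p j, 0 < volume (cells p j)) (hfin : ∀ p j, volume (cells p j) < ⊤)
    (hbd : ∀ p j, μ (frontier (cells p j)) = 0)
    (mesh : ℕ → ℝ) (hmesh : Tendsto mesh atTop (𝓝 0))
    (hdiam : ∀ p j, Metric.diam (cells p j) ≤ mesh p) :
    (∀ p,
      (Measure.sum fun j =>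
          (ENNReal.ofReal (∫ x in cells p j,
              (f x) ^ ((k : ℝ) / n) * (g x) ^ (((n - k : ℕ) : ℝ) / n) ∂μ)
            / volume (cells p j)) • volume.restrict (cells p j))
        ≤ (Measure.sum fun j =>
            (ENNReal.ofReal
                ((∫ x in cells p j, f x ∂μ) ^ ((k : ℝ) / n)
                  * (∫ x in cells p j, g x ∂μ) ^ (((n - k : ℕ) : ℝ) / n))
              / volume (cells p j)) • volume.restrict (cells p j)))
    ∧ ∀ χ : (Fin m → ℝ) → ℝ, Continuous χ → HasCompactSupport χ →
        Tendsto
          (fun p => ∫ x, χ x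
            ∂(Measure.sum fun j =>
                (ENNReal.ofReal (∫ x in cells p j,
                    (f x) ^ ((k : ℝ) / n) * (g x) ^ (((n - k : ℕ) : ℝ) / n) ∂μ)
                  / volume (cells p j)) • volume.restrict (cells p j)))
          atTop
          (𝓝 (∫ x, χ x
            ∂(μ.withDensity fun x =>
                ENNReal.ofReal ((f x) ^ ((k : ℝ) / n) * (g x) ^ (((n - k : ℕ) : ℝ) / n))))) := by
  have hkltn : k < n := by omega
  have hn0 : (0 : ℝ) < n := by exact_mod_cast Nat.pos_of_ne_zero (by omega)
  have ha : 0 < (k : ℝ) / n := div_pos (by exact_mod_cast hk1) hn0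
  have hb : 0 < ((n - k : ℕ) : ℝ) / n := div_pos (by exact_mod_cast (by omega : 0 < n - k)) hn0
  have hab : (k : ℝ) / n + ((n - k : ℕ) : ℝ) / n = 1 := by
    rw [← add_div, Nat.cast_sub hkltn.le]
    field_simp
    ring
  have hφ0 : ∀ x, 0 ≤ f x ^ ((k : ℝ) / n) * g x ^ (((n - k : ℕ) : ℝ) / n) := fun x =>
    mul_nonneg (Real.rpow_nonneg (hf0 x) _) (Real.rpow_nonneg (hg0 x) _)
  have hφsm : AEStronglyMeasurable
      (fun x => f x ^ ((k : ℝ) / n) * g x ^ (((n - k : ℕ) : ℝ) / n)) μ := by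
    have hfa := hf.1.aemeasurable
    have hga := hg.1.aemeasurable
    have h : AEMeasurable (fun x => f x ^ ((k : ℝ) / n) * g x ^ (((n - k : ℕ) : ℝ) / n)) μ := by
      fun_prop
    exact h.aestronglyMeasurable
  have hφle : ∀ x, f x ^ ((k : ℝ) / n) * g x ^ (((n - k : ℕ) : ℝ) / n) ≤ f x + g x := fun x => by
    have h0 : (0 : ℝ) ≤ f x + g x := add_nonneg (hf0 x) (hg0 x)
    calc f x ^ ((k : ℝ) / n) * g x ^ (((n - k : ℕ) : ℝ) / n)
        ≤ (f x + g x) ^ ((k : ℝ) / n) * (f x + g x) ^ (((n - k : ℕ) : ℝ) / n) :=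
          mul_le_mul (Real.rpow_le_rpow (hf0 x) (le_add_of_nonneg_right (hg0 x)) ha.le)
            (Real.rpow_le_rpow (hg0 x) (le_add_of_nonneg_left (hf0 x)) hb.le)
            (Real.rpow_nonneg (hg0 x) _) (Real.rpow_nonneg h0 _)
      _ = (f x + g x) ^ ((k : ℝ) / n + ((n - k : ℕ) : ℝ) / n) :=
          (Real.rpow_add' h0 (by rw [hab]; exact one_ne_zero)).symm
      _ = f x + g x := by rw [hab, Real.rpow_one]
  have hφint : Integrable (fun x => f x ^ ((k : ℝ) / n) * g x ^ (((n - k : ℕ) : ℝ) / n)) μ :=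
    (hf.add hg).mono hφsm (ae_of_all _ fun x => by
      rw [Real.norm_eq_abs, Real.norm_eq_abs, abs_of_nonneg (hφ0 x)]
      exact (hφle x).trans (le_abs_self _))
  constructor
  · intro p
    refine Measure.le_iff.2 fun s hs => ?_
    rw [Measure.sum_apply _ hs, Measure.sum_apply _ hs]
    refine ENNReal.tsum_le_tsum fun j => ?_
    rw [Measure.smul_apply, Measure.smul_apply, smul_eq_mul, smul_eq_mul]
    refine mul_le_mul_left ?_ _
    refine ENNReal.div_le_div_right (ENNReal.ofReal_le_ofReal ?_) _
    exact holder_aux _ hf.integrableOn hg.integrableOn hf0 hg0 ha hb hab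
  · intro χ hχc hχs
    exact approx_aux μ I hI hμI hφ0 hφint cells hmeas hdisj hcover hpos hfin
      mesh hmesh hdiam χ hχc hχs
end
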